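/- Let M be a finite set of Metzler matrices. The associated graph G(M) is strongly connected if and only if for all indices i, j ∈ {1,…,n} there exist k ∈ ℕ, matrices A₁,…,A_k ∈ M and times t₁,…,t_k > 0 such that the (i,j) entry of exp(A₁t₁)···exp(A_k t_k) is strictly positive. -/

import Mathlib

open NormedSpace

section Aux
variable {n : ℕ}

lemma hasSum_exp_entry (X : Matrix (Fin n) (Fin n) ℝ) (i j : Fin n) :
    HasSum (fun m : ℕ => ((m.factorial : ℝ)⁻¹ • X ^ m) i j) (exp X i j) := by
  letI : NormedRing (Matrix (Fin n) (Fin n) ℝ) := Matrix.linftyOpNormedRing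
  letI : NormedAlgebra ℝ (Matrix (Fin n) (Fin n) ℝ) := Matrix.linftyOpNormedAlgebra
  have h : HasSum (fun m : ℕ => ((m.factorial : ℝ)⁻¹ • X ^ m)) (exp X) := by
    rw [exp_eq_tsum ℝ]
    exact (expSeries_summable' (𝕂 := ℝ) X).hasSum
  exact (Pi.hasSum.mp ((Pi.hasSum.mp h) i)) j

lemma exp_smul_one (c : ℝ) :
    exp (c • (1 : Matrix (Fin n) (Fin n) ℝ)) = Real.exp c • 1 := by
  have h1 : c • (1 : Matrix (Fin n) (Fin n) ℝ) = Matrix.diagonal (fun _ => c) := by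
    ext a b
    by_cases h : a = b <;> simp [Matrix.one_apply, Matrix.diagonal, h]
  have h2 : Real.exp c • (1 : Matrix (Fin n) (Fin n) ℝ)
      = Matrix.diagonal (fun _ => Real.exp c) := by
    ext a b
    by_cases h : a = b <;> simp [Matrix.one_apply, Matrix.diagonal, h]
  rw [h1, h2, Matrix.exp_diagonal]
  ext x
  simp [Pi.exp_def, Real.exp_eq_exp_ℝ]

lemma exp_shift (A : Matrix (Fin n) (Fin n) ℝ) (c : ℝ) (i j : Fin n) :
    exp (A + c • 1) i j = Real.exp c * exp A i j := by
  rw [Matrix.exp_add_of_commute A (c • 1) (by simp [Commute, SemiconjBy]),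
    exp_smul_one]
  simp [Matrix.mul_smul, mul_comm]

/-- powers of entrywise-nonneg matrices are entrywise nonneg -/
lemma pow_entry_nonneg {X : Matrix (Fin n) (Fin n) ℝ} (hX : ∀ a b, 0 ≤ X a b)
    (m : ℕ) : ∀ a b, 0 ≤ (X ^ m) a b := by
  induction m with
  | zero => intro a b; by_cases h : a = b <;> simp [Matrix.one_apply, h]
  | succ k ih =>
    intro a b
    rw [pow_succ, Matrix.mul_apply]
    exact Finset.sum_nonneg fun k' _ => mul_nonneg (ih a k') (hX k' b)

/-- exp of entrywise-nonneg matrix is entrywise ≥ each term of the series -/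
lemma exp_entry_ge {X : Matrix (Fin n) (Fin n) ℝ} (hX : ∀ a b, 0 ≤ X a b)
    (m : ℕ) (i j : Fin n) :
    ((m.factorial : ℝ)⁻¹ • X ^ m) i j ≤ exp X i j :=
  le_hasSum (hasSum_exp_entry X i j) m fun k _ => by
    simpa using mul_nonneg (by positivity) (pow_entry_nonneg hX k i j)

lemma exp_entry_nonneg' {X : Matrix (Fin n) (Fin n) ℝ} (hX : ∀ a b, 0 ≤ X a b)
    (i j : Fin n) : 0 ≤ exp X i j := by
  refine le_trans ?_ (exp_entry_ge hX 0 i j)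
  have := pow_entry_nonneg hX 0 i j
  simp only [Matrix.smul_apply, smul_eq_mul]
  positivity

/-- Metzler shift: for any matrix with nonneg off-diagonal entries, we find c with
A + c•1 entrywise nonneg. -/
lemma metzler_shift (A : Matrix (Fin n) (Fin n) ℝ) (hA : ∀ i j, i ≠ j → 0 ≤ A i j) :
    ∃ c : ℝ, ∀ a b, 0 ≤ (A + c • (1 : Matrix (Fin n) (Fin n) ℝ)) a b := by
  refine ⟨∑ k, |A k k|, fun a b => ?_⟩
  by_cases h : a = b
  · subst h
    simp only [Matrix.add_apply, Matrix.smul_apply, Matrix.one_apply_eq, smul_eq_mul, mul_one]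
    have h1 : |A a a| ≤ ∑ k, |A k k| :=
      Finset.single_le_sum (f := fun k => |A k k|) (fun k _ => abs_nonneg _) (Finset.mem_univ a)
    linarith [neg_abs_le (A a a)]
  · simpa [Matrix.one_apply, h] using hA a b h

/-- exp of a Metzler matrix is entrywise nonneg. -/
lemma exp_metzler_nonneg {A : Matrix (Fin n) (Fin n) ℝ} (hA : ∀ i j, i ≠ j → 0 ≤ A i j)
    (i j : Fin n) : 0 ≤ exp A i j := by
  obtain ⟨c, hc⟩ := metzler_shift A hA
  have h := exp_entry_nonneg' hc i j
  rw [exp_shift] at h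
  nlinarith [Real.exp_pos c]

end Aux
open NormedSpace

section Aux
variable {n : ℕ}

lemma stmt6_mul_entry_pos {P Q : Matrix (Fin n) (Fin n) ℝ}
    (hP : ∀ a b, 0 ≤ P a b) (hQ : ∀ a b, 0 ≤ Q a b) {i k j : Fin n}
    (h1 : 0 < P i k) (h2 : 0 < Q k j) : 0 < (P * Q) i j := by
  rw [Matrix.mul_apply]
  exact lt_of_lt_of_le (mul_pos h1 h2)
    (Finset.single_le_sum (f := fun k => P i k * Q k j)
      (fun k _ => mul_nonneg (hP i k) (hQ k j)) (Finset.mem_univ k))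

lemma stmt6_mul_entry_pos_exists {P Q : Matrix (Fin n) (Fin n) ℝ}
    (hP : ∀ a b, 0 ≤ P a b) (hQ : ∀ a b, 0 ≤ Q a b) {i j : Fin n}
    (h : 0 < (P * Q) i j) : ∃ k, 0 < P i k ∧ 0 < Q k j := by
  rw [Matrix.mul_apply] at h
  by_contra hcon
  push_neg at hcon
  have : ∑ k, P i k * Q k j ≤ 0 := Finset.sum_nonpos fun k _ => by
    rcases lt_or_ge 0 (P i k) with h1 | h1
    · have := hcon k h1
      exact mul_nonpos_of_nonneg_of_nonpos (hP i k) this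
    · exact mul_nonpos_of_nonpos_of_nonneg (le_antisymm h1 (hP i k)).le (hQ k j)
  linarith

lemma stmt6_exp_metzler_pos_of_pos {A : Matrix (Fin n) (Fin n) ℝ}
    (hA : ∀ i j, i ≠ j → 0 ≤ A i j) {a b : Fin n} (hab : a ≠ b) (h : 0 < A a b) :
    0 < exp A a b := by
  obtain ⟨c, hc⟩ := metzler_shift A hA
  have h1 : (((Nat.factorial 1 : ℝ)⁻¹ • (A + c • 1) ^ 1 : Matrix (Fin n) (Fin n) ℝ)) a b ≤ exp (A + c • 1) a b :=
    exp_entry_ge hc 1 a b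
  have h2 : (((Nat.factorial 1 : ℝ)⁻¹ • (A + c • 1) ^ 1 : Matrix (Fin n) (Fin n) ℝ)) a b = A a b := by
    simp [Matrix.one_apply, hab]
  rw [h2] at h1
  have h3 : 0 < exp (A + c • 1) a b := lt_of_lt_of_le h h1
  rw [exp_shift] at h3
  nlinarith [Real.exp_pos c]

lemma stmt6_pow_pos_reach {X : Matrix (Fin n) (Fin n) ℝ} (hX : ∀ a b, 0 ≤ X a b) :
    ∀ (m : ℕ) (a b : Fin n), 0 < (X ^ m) a b →
      Relation.ReflTransGen (fun x y => x ≠ y ∧ 0 < X x y) a b := by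
  intro m
  induction m with
  | zero =>
    intro a b h
    by_cases hab : a = b
    · exact hab ▸ Relation.ReflTransGen.refl
    · simp [Matrix.one_apply, hab] at h
  | succ k ih =>
    intro a b h
    rw [pow_succ'] at h
    obtain ⟨w, hw1, hw2⟩ :=
      stmt6_mul_entry_pos_exists hX (pow_entry_nonneg hX k) h
    have htail := ih w b hw2
    by_cases haw : a = w
    · exact haw ▸ htail
    · exact Relation.ReflTransGen.head ⟨haw, hw1⟩ htail

lemma stmt6_exp_pos_exists_pow {X : Matrix (Fin n) (Fin n) ℝ}
    (hX : ∀ a b, 0 ≤ X a b) {i j : Fin n} (h : 0 < exp X i j) :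
    ∃ m, 0 < (X ^ m) i j := by
  by_contra hcon
  push_neg at hcon
  have hz : (fun m : ℕ => ((m.factorial : ℝ)⁻¹ • X ^ m) i j) = fun _ => (0:ℝ) := by
    funext m
    have h1 := pow_entry_nonneg hX m i j
    have h2 := hcon m
    have : (X ^ m) i j = 0 := le_antisymm h2 h1
    simp [this]
  have := (hasSum_exp_entry X i j)
  rw [hz] at this
  have := this.unique hasSum_zero
  linarith

lemma stmt6_exp_metzler_reach {A : Matrix (Fin n) (Fin n) ℝ}
    (hA : ∀ i j, i ≠ j → 0 ≤ A i j) {a b : Fin n} (h : 0 < exp A a b) :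
    Relation.ReflTransGen (fun x y => x ≠ y ∧ 0 < A x y) a b := by
  obtain ⟨c, hc⟩ := metzler_shift A hA
  have h1 : 0 < exp (A + c • 1) a b := by
    rw [exp_shift]
    positivity
  obtain ⟨m, hm⟩ := stmt6_exp_pos_exists_pow hc h1
  refine Relation.ReflTransGen.mono ?_ a b (stmt6_pow_pos_reach hc m a b hm)
  rintro x y ⟨hxy, hpos⟩
  refine ⟨hxy, ?_⟩
  simpa [Matrix.one_apply, hxy] using hpos

lemma stmt6_list_prod_nonneg :
    ∀ L : List (Matrix (Fin n) (Fin n) ℝ), (∀ P ∈ L, ∀ a b, 0 ≤ P a b) →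
      ∀ a b, 0 ≤ L.prod a b := by
  intro L
  induction L with
  | nil =>
    intro _ a b
    by_cases h : a = b <;> simp [Matrix.one_apply, h]
  | cons P L ih =>
    intro hL a b
    rw [List.prod_cons, Matrix.mul_apply]
    exact Finset.sum_nonneg fun k _ => mul_nonneg (hL P (by simp) a k)
      (ih (fun Q hQ => hL Q (by simp [hQ])) k b)

end Aux

/-- `G(M)` is strongly connected iff for all `i j` there are
matrices `A₁,…,A_k ∈ M` and times `t₁,…,t_k > 0` with
`(exp(A₁t₁)⋯exp(A_k t_k))_{ij} > 0`. -/
theorem stmt6 (n : ℕ) (M : Finset (Matrix (Fin n) (Fin n) ℝ))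
    (hMetzler : ∀ A ∈ M, ∀ i j, i ≠ j → 0 ≤ A i j) :
    (∀ i j : Fin n, Relation.ReflTransGen
        (fun a b : Fin n => a ≠ b ∧ ∃ A ∈ M, 0 < A a b) i j) ↔
      (∀ i j : Fin n, ∃ l : List (Matrix (Fin n) (Fin n) ℝ × ℝ),
        (∀ p ∈ l, p.1 ∈ M ∧ 0 < p.2) ∧
        0 < (l.map (fun p => NormedSpace.exp (p.2 • p.1))).prod i j) := by
  have hsM : ∀ p : Matrix (Fin n) (Fin n) ℝ × ℝ, p.1 ∈ M → 0 < p.2 →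
      ∀ a b, a ≠ b → 0 ≤ (p.2 • p.1) a b := fun p hp ht a b hab => by
    simpa using mul_nonneg ht.le (hMetzler p.1 hp a b hab)
  constructor
  · intro h i j
    induction h i j with
    | refl => exact ⟨[], by simp, by simp [Matrix.one_apply]⟩
    | @tail b c hib hbc ih =>
      obtain ⟨l, hl, hpos⟩ := ih
      obtain ⟨hbc', A, hAM, hA⟩ := hbc
      refine ⟨l ++ [(A, 1)], ?_, ?_⟩
      · intro p hp
        rcases List.mem_append.mp hp with h' | h'
        · exact hl p h'
        · simp only [List.mem_singleton] at h'
          exact h' ▸ ⟨hAM, one_pos⟩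
      · rw [List.map_append, List.prod_append]
        simp only [List.map_cons, List.map_nil, List.prod_cons, List.prod_nil, mul_one]
        have hAm : ∀ a b, a ≠ b → 0 ≤ ((1:ℝ) • A) a b := hsM (A, 1) hAM one_pos
        refine stmt6_mul_entry_pos ?_ ?_ hpos
            (stmt6_exp_metzler_pos_of_pos hAm hbc' (by simpa using hA))
        · exact stmt6_list_prod_nonneg _ (by
            intro P hP a' b'
            obtain ⟨p, hp, rfl⟩ := List.mem_map.mp hP
            exact exp_metzler_nonneg (hsM p (hl p hp).1 (hl p hp).2) a' b')
        · exact fun a' b' => exp_metzler_nonneg hAm a' b'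
  · intro h i j
    obtain ⟨l, hl, hpos⟩ := h i j
    clear hMetzler
    induction l generalizing i with
    | nil =>
      simp only [List.map_nil, List.prod_nil] at hpos
      by_cases hij : i = j
      · exact hij ▸ Relation.ReflTransGen.refl
      · simp [Matrix.one_apply, hij] at hpos
    | cons p l ih =>
      simp only [List.map_cons, List.prod_cons] at hpos
      have hpM : ∀ a b, a ≠ b → 0 ≤ (p.2 • p.1) a b :=
        hsM p (hl p (by simp)).1 (hl p (by simp)).2
      have hrest : ∀ a b, 0 ≤ (l.map (fun p => exp (p.2 • p.1))).prod a b :=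
        stmt6_list_prod_nonneg _ (by
          intro P hP a' b'
          obtain ⟨q, hq, rfl⟩ := List.mem_map.mp hP
          exact exp_metzler_nonneg (hsM q (hl q (by simp [hq])).1 (hl q (by simp [hq])).2) a' b')
      obtain ⟨k, hk1, hk2⟩ := stmt6_mul_entry_pos_exists
        (fun a b => exp_metzler_nonneg hpM a b) hrest hpos
      have h1 : Relation.ReflTransGen
          (fun x y => x ≠ y ∧ ∃ A ∈ M, 0 < A x y) i k := by
        refine Relation.ReflTransGen.mono ?_ i k (stmt6_exp_metzler_reach hpM hk1)
        rintro x y ⟨hxy, hxy'⟩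
        refine ⟨hxy, p.1, (hl p (by simp)).1, ?_⟩
        have := (hl p (by simp)).2
        simp only [Matrix.smul_apply, smul_eq_mul] at hxy'
        nlinarith
      exact h1.trans (ih k (fun q hq => hl q (List.mem_cons_of_mem p hq)) hk2)
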